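/- Let X and Y be independent nonnegative real-valued random variables on a probability space, with X exponentially distributed with rate a > 0 and Y exponentially distributed with rate b > 0, where a ≠ b. Then for all c1 > 0 and c2 > 0, setting B = c1 + c2, the strict inequality 1 − (b·e^{−a·B} − a·e^{−b·B})/(b − a) > (1 − e^{−a·c1})·(1 − e^{−b·c2}) holds; equivalently, P(X + Y ≤ B) > P(X ≤ c1 and Y ≤ c2 and X + Y ≤ B). -/

import Mathlib

open MeasureTheory ProbabilityTheory Real Set

-- expMeasure of Iic
lemma expMeasure_Iic {r : ℝ} (hr : 0 < r) (x : ℝ) :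
    expMeasure r (Iic x) = ENNReal.ofReal (if 0 ≤ x then 1 - exp (-(r * x)) else 0) := by
  rw [expMeasure, gammaMeasure, withDensity_apply _ measurableSet_Iic]
  rw [← lintegral_exponentialPDF_eq_antiDeriv hr x]
  rfl

-- key calculus lemma
lemma key_mono {x y : ℝ} (hx : 0 < x) (hxy : x < y) :
    x * (1 - exp (-y)) < y * (1 - exp (-x)) := by
  set g : ℝ → ℝ := fun t => t * (1 - exp (-x)) - x * (1 - exp (-t)) with hg
  have hderiv : ∀ t ∈ interior (Ici x), 0 < deriv g t := by
    intro t ht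
    rw [interior_Ici] at ht
    have hd : HasDerivAt g ((1 - exp (-x)) - x * exp (-t)) t := by
      have h1 : HasDerivAt (fun t : ℝ => t * (1 - exp (-x))) (1 - exp (-x)) t := by
        simpa using (hasDerivAt_id t).mul_const (1 - exp (-x))
      have h2 : HasDerivAt (fun t : ℝ => x * (1 - exp (-t))) (x * exp (-t)) t := by
        have : HasDerivAt (fun t : ℝ => exp (-t)) (-exp (-t)) t := by
          simpa using (hasDerivAt_neg t).exp
        simpa using ((hasDerivAt_const t (1:ℝ)).sub this).const_mul x
      exact h1.sub h2
    rw [hd.deriv]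
    have h3 : exp (-t) < exp (-x) := exp_lt_exp.2 (by linarith [ht.out])
    have h4 : x + 1 < exp x := add_one_lt_exp (ne_of_gt hx)
    have h5 : exp (-x) * exp x = 1 := by rw [← exp_add]; simp
    nlinarith [exp_pos (-x), exp_pos (-t)]
  have hcont : ContinuousOn g (Ici x) := by fun_prop
  have hmono : StrictMonoOn g (Ici x) :=
    strictMonoOn_of_deriv_pos (convex_Ici x) hcont hderiv
  have := hmono self_mem_Ici (mem_Ici.2 hxy.le) hxy
  simp only [hg] at this
  nlinarith [this]

-- analytic inequality for a < b
lemma main_ineq {a b c1 c2 : ℝ} (ha : 0 < a) (hlt : a < b) (hc1 : 0 < c1) (hc2 : 0 < c2) :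
    1 - (b * exp (-a * (c1 + c2)) - a * exp (-b * (c1 + c2))) / (b - a)
      > (1 - exp (-a * c1)) * (1 - exp (-b * c2)) := by
  have hb : 0 < b := ha.trans hlt
  set p := exp (-a * c1)
  set q := exp (-a * c2)
  set r := exp (-b * c1)
  set s := exp (-b * c2)
  have hp : 0 < p := exp_pos _
  have hs : 0 < s := exp_pos _
  -- b*(1-q) > a*(1-s)
  have k1 : a * c2 * (1 - exp (-(b * c2))) < b * c2 * (1 - exp (-(a * c2))) :=
    key_mono (by positivity) (by nlinarith)
  have k2 : a * c1 * (1 - exp (-(b * c1))) < b * c1 * (1 - exp (-(a * c1))) :=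
    key_mono (by positivity) (by nlinarith)
  have hq' : exp (-(a * c2)) = q := by rw [← neg_mul]
  have hs' : exp (-(b * c2)) = s := by rw [← neg_mul]
  have hp' : exp (-(a * c1)) = p := by rw [← neg_mul]
  have hr' : exp (-(b * c1)) = r := by rw [← neg_mul]
  rw [hq', hs'] at k1
  rw [hp', hr'] at k2
  have e1 : b * (1 - q) > a * (1 - s) := by
    have := (mul_lt_mul_iff_left₀ hc2).mp (by nlinarith : a * (1 - s) * c2 < b * (1 - q) * c2)
    linarith
  have e2 : b * (1 - p) > a * (1 - r) := by
    have := (mul_lt_mul_iff_left₀ hc1).mp (by nlinarith : a * (1 - r) * c1 < b * (1 - p) * c1)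
    linarith
  have eB1 : exp (-a * (c1 + c2)) = p * q := by rw [← exp_add]; ring_nf
  have eB2 : exp (-b * (c1 + c2)) = r * s := by rw [← exp_add]; ring_nf
  rw [eB1, eB2]
  have hba : 0 < b - a := by linarith
  rw [gt_iff_lt, ← sub_pos]
  have key : (b - a) * (1 - (1 - p) * (1 - s)) - (b * (p * q) - a * (r * s)) > 0 := by
    nlinarith [mul_pos hp (sub_pos.2 (show a * (1 - s) < b * (1 - q) from e1)),
      mul_pos hs (sub_pos.2 (show a * (1 - r) < b * (1 - p) from e2))]
  have : (b * (p * q) - a * (r * s)) / (b - a) < 1 - (1 - p) * (1 - s) := by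
    rw [div_lt_iff₀ hba]; nlinarith
  linarith

/-- Joint latency management strictly outperforms any disjoint split of the
same budget (distinct exponential rates). -/
theorem joint_strictly_beats_disjoint_distinct_rates
    {Ω : Type*} [MeasureSpace Ω] [IsProbabilityMeasure (ℙ : Measure Ω)]
    (X Y : Ω → ℝ) (hX : Measurable X) (hY : Measurable Y)
    (hXnn : ∀ ω, 0 ≤ X ω) (hYnn : ∀ ω, 0 ≤ Y ω)
    (hind : IndepFun X Y)
    (a b : ℝ) (ha : 0 < a) (hb : 0 < b) (hab : a ≠ b)
    (hXd : Measure.map X ℙ = expMeasure a)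
    (hYd : Measure.map Y ℙ = expMeasure b)
    (c1 c2 B : ℝ) (hc1 : 0 < c1) (hc2 : 0 < c2) (hB : B = c1 + c2) :
    1 - (b * exp (-a * B) - a * exp (-b * B)) / (b - a)
        > (1 - exp (-a * c1)) * (1 - exp (-b * c2))
    ∧ ℙ {ω | X ω + Y ω ≤ B}
        > ℙ {ω | X ω ≤ c1 ∧ Y ω ≤ c2 ∧ X ω + Y ω ≤ B} := by
  constructor
  · subst hB
    rcases lt_or_gt_of_ne hab with h | h
    · exact main_ineq ha h hc1 hc2
    · have hm := main_ineq hb h hc2 hc1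
      rw [show c2 + c1 = c1 + c2 by ring] at hm
      have hne : a - b ≠ 0 := sub_ne_zero.2 hab
      have hne' : b - a ≠ 0 := sub_ne_zero.2 (Ne.symm hab)
      have heq : (a * exp (-b * (c1 + c2)) - b * exp (-a * (c1 + c2))) / (a - b)
          = (b * exp (-a * (c1 + c2)) - a * exp (-b * (c1 + c2))) / (b - a) := by
        field_simp
        ring
      rw [heq] at hm
      linarith [hm, mul_comm (1 - exp (-b * c2)) (1 - exp (-a * c1))]
  · -- measure part
    -- abbreviations for probability of preimages
    have hprX : ∀ s : Set ℝ, MeasurableSet s → ℙ (X ⁻¹' s) = expMeasure a s := by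
      intro s hs
      rw [← hXd, Measure.map_apply hX hs]
    have hprY : ∀ s : Set ℝ, MeasurableSet s → ℙ (Y ⁻¹' s) = expMeasure b s := by
      intro s hs
      rw [← hYd, Measure.map_apply hY hs]
    set S : Set Ω := X ⁻¹' Set.Iic c1 ∩ Y ⁻¹' Set.Iic c2 with hS
    set m : ℝ := c1 + c2 / 2 with hm
    set D : Set Ω := X ⁻¹' Set.Ioc c1 m ∩ Y ⁻¹' Set.Iic (c2 / 2) with hD
    have hSet : {ω | X ω ≤ c1 ∧ Y ω ≤ c2 ∧ X ω + Y ω ≤ B} = S := by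
      ext ω
      simp only [hS, Set.mem_setOf_eq, Set.mem_inter_iff, Set.mem_preimage, Set.mem_Iic]
      constructor
      · rintro ⟨h1, h2, _⟩; exact ⟨h1, h2⟩
      · rintro ⟨h1, h2⟩; exact ⟨h1, h2, by rw [hB]; linarith⟩
    have hSmeas : MeasurableSet S := (hX measurableSet_Iic).inter (hY measurableSet_Iic)
    have hDmeas : MeasurableSet D := (hX measurableSet_Ioc).inter (hY measurableSet_Iic)
    have hsub : S ∪ D ⊆ {ω | X ω + Y ω ≤ B} := by
      rintro ω (⟨h1, h2⟩ | ⟨h1, h2⟩)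
      · simp only [Set.mem_preimage, Set.mem_Iic] at h1 h2
        show X ω + Y ω ≤ B
        rw [hB]; linarith
      · simp only [Set.mem_preimage, Set.mem_Ioc, Set.mem_Iic] at h1 h2
        show X ω + Y ω ≤ B
        have h3 := h1.2
        rw [hm] at h3
        rw [hB]; linarith
    have hdisj : Disjoint S D := by
      rw [Set.disjoint_left]
      rintro ω ⟨h1, _⟩ ⟨h3, _⟩
      simp only [Set.mem_preimage, Set.mem_Iic, Set.mem_Ioc] at h1 h3
      linarith [h3.1]
    have hDval : ℙ D = expMeasure a (Set.Ioc c1 m) * expMeasure b (Set.Iic (c2 / 2)) := by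
      rw [hD, hind.measure_inter_preimage_eq_mul _ _ measurableSet_Ioc measurableSet_Iic,
        hprX _ measurableSet_Ioc, hprY _ measurableSet_Iic]
    have hYpos : 0 < expMeasure b (Set.Iic (c2 / 2)) := by
      rw [expMeasure_Iic hb, if_pos (by linarith), ENNReal.ofReal_pos]
      have : exp (-(b * (c2 / 2))) < 1 := by
        rw [exp_lt_one_iff]
        nlinarith
      linarith
    haveI : IsProbabilityMeasure (expMeasure a) := isProbabilityMeasure_expMeasure ha
    have hIocX : 0 < expMeasure a (Set.Ioc c1 m) := by
      have hdiff : Set.Ioc c1 m = Set.Iic m \ Set.Iic c1 := by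
        ext x
        simp only [Set.mem_Ioc, Set.mem_diff, Set.mem_Iic, not_le]
        tauto
      have hmpos : (0:ℝ) ≤ m := by rw [hm]; positivity
      rw [hdiff, measure_diff (Set.Iic_subset_Iic.2 (by rw [hm]; linarith))
        measurableSet_Iic.nullMeasurableSet (measure_ne_top _ _),
        expMeasure_Iic ha, expMeasure_Iic ha, if_pos hmpos, if_pos hc1.le]
      rw [tsub_pos_iff_lt]
      have hexp : exp (-(a * m)) < exp (-(a * c1)) := by
        rw [exp_lt_exp, neg_lt_neg_iff]
        rw [hm]; nlinarith
      have h1 : (0:ℝ) < 1 - exp (-(a * m)) := by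
        have : exp (-(a * m)) < 1 := by rw [exp_lt_one_iff]; rw [hm]; nlinarith
        linarith
      exact ENNReal.ofReal_lt_ofReal_iff h1 |>.mpr (by linarith)
    have hDpos : ℙ D ≠ 0 := by
      rw [hDval]
      exact (ENNReal.mul_pos hIocX.ne' hYpos.ne').ne'
    have hstep : ℙ S < ℙ (S ∪ D) := by
      rw [measure_union hdisj hDmeas]
      exact ENNReal.lt_add_right (measure_ne_top _ _) hDpos
    rw [hSet]
    exact lt_of_lt_of_le hstep (measure_mono hsub)
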